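/- Let A = (A1 A2) ∈ ℝ^{m×n} with A1 ∈ ℝ^{m×k} of full rank k, and set 𝒜 = P⊥_{A1}(A2) with singular values σ1 ≥ σ2 ≥ …; assume σ_{r−k} > σ_{r−k+1}. For weight matrices W = (W1 W2), with W1 having positive entries and W2 bounded, let (X̃1(W) X̃2(W)) minimize ‖((A1 A2) − (X1 X2)) ⊙ (W1 W2)‖_F² over rank(X1 X2) ≤ r, set 𝒜̃ = P⊥_{X̃1(W)}(A2) and λ = min_{i,j}(W1)_{ij}. Then ‖H_{r−k}(𝒜̃) − H_{r−k}(𝒜)‖ = O(1/λ) as λ → ∞. -/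

import Mathlib

open Matrix Filter Topology

noncomputable def frob {α β : Type*} [Fintype α] [Fintype β] (M : Matrix α β ℝ) : ℝ :=
  Real.sqrt (∑ i, ∑ j, (M i j) ^ 2)

noncomputable def projCol {m k : ℕ} (B : Matrix (Fin m) (Fin k) ℝ) :
    Matrix (Fin m) (Fin m) ℝ :=
  B * (Bᵀ * B)⁻¹ * Bᵀ

/-- The `p × q` diagonal matrix whose `(i,i)` entry is the `(i+1)`-st value of `σ`
(singular values are indexed starting from `1`, as in the paper). -/
def svdDiag (p q : ℕ) (σ : ℕ → ℝ) : Matrix (Fin p) (Fin q) ℝ :=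
  Matrix.of fun i j => if (i : ℕ) = (j : ℕ) then σ ((i : ℕ) + 1) else 0

/-- `svdDiag` truncated to its `r` leading (largest) singular values. -/
def svdTrunc (p q r : ℕ) (σ : ℕ → ℝ) : Matrix (Fin p) (Fin q) ℝ :=
  Matrix.of fun i j => if (i : ℕ) = (j : ℕ) ∧ (i : ℕ) < r then σ ((i : ℕ) + 1) else 0

/-- `M = U * Σ * Vᵀ` is a singular value decomposition of `M`, with singular values
`σ 1 ≥ σ 2 ≥ ⋯ ≥ 0` arranged in non-increasing order. -/
structure IsSVD {p q : ℕ} (M : Matrix (Fin p) (Fin q) ℝ)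
    (U : Matrix (Fin p) (Fin p) ℝ) (σ : ℕ → ℝ) (V : Matrix (Fin q) (Fin q) ℝ) : Prop where
  hUl : Uᵀ * U = 1
  hUr : U * Uᵀ = 1
  hVl : Vᵀ * V = 1
  hVr : V * Vᵀ = 1
  hM : M = U * svdDiag p q σ * Vᵀ
  anti : ∀ i j : ℕ, 1 ≤ i → i ≤ j → σ j ≤ σ i
  nonneg : ∀ i : ℕ, 1 ≤ i → 0 ≤ σ i


namespace Stmt8

attribute [local instance] Matrix.frobeniusSeminormedAddCommGroup
  Matrix.frobeniusNormedAddCommGroup Matrix.frobeniusNormedSpace Matrix.frobeniusNormedRing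

variable {α β γ : Type*} [Fintype α] [Fintype β] [Fintype γ]

lemma frob_eq_norm (M : Matrix α β ℝ) : frob M = ‖M‖ := by
  rw [Matrix.frobenius_norm_def, frob, Real.sqrt_eq_rpow]
  congr 1
  refine Finset.sum_congr rfl fun i _ => Finset.sum_congr rfl fun j _ => ?_
  rw [Real.rpow_two, Real.norm_eq_abs, sq_abs]

lemma frob_nonneg (M : Matrix α β ℝ) : 0 ≤ frob M := Real.sqrt_nonneg _

lemma frob_sq (M : Matrix α β ℝ) : frob M ^ 2 = ∑ i, ∑ j, (M i j) ^ 2 := by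
  rw [frob, Real.sq_sqrt]; positivity

lemma frob_sq_eq_trace (M : Matrix α β ℝ) : frob M ^ 2 = Matrix.trace (Mᵀ * M) := by
  rw [frob_sq, Finset.sum_comm, Matrix.trace]
  simp [Matrix.mul_apply, sq]

lemma frob_eq_of_sq_eq {M : Matrix α β ℝ} {N : Matrix γ β ℝ} (h : frob M ^ 2 = frob N ^ 2) :
    frob M = frob N := by
  calc frob M = Real.sqrt (frob M ^ 2) := (Real.sqrt_sq (frob_nonneg M)).symm
    _ = Real.sqrt (frob N ^ 2) := by rw [h]
    _ = frob N := Real.sqrt_sq (frob_nonneg N)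

lemma frob_transpose (M : Matrix α β ℝ) : frob Mᵀ = frob M := by
  rw [frob_eq_norm, frob_eq_norm]; exact Matrix.frobenius_norm_transpose M

lemma frob_mul_le (A : Matrix α β ℝ) (B : Matrix β γ ℝ) : frob (A * B) ≤ frob A * frob B := by
  rw [frob_eq_norm, frob_eq_norm, frob_eq_norm]; exact Matrix.frobenius_norm_mul A B

-- orthogonal invariance
lemma frob_orth_left [DecidableEq α] {Q : Matrix α α ℝ} (hQ : Qᵀ * Q = 1) (A : Matrix α β ℝ) :
    frob (Q * A) = frob A := by
  refine frob_eq_of_sq_eq ?_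
  rw [frob_sq_eq_trace, frob_sq_eq_trace, Matrix.transpose_mul, Matrix.mul_assoc,
    ← Matrix.mul_assoc Qᵀ Q A, hQ, Matrix.one_mul]

lemma frob_orth_right [DecidableEq β] {Q : Matrix β β ℝ} (hQ : Q * Qᵀ = 1) (A : Matrix α β ℝ) :
    frob (A * Q) = frob A := by
  rw [← frob_transpose (A * Q), Matrix.transpose_mul, frob_orth_left (by
    rw [Matrix.transpose_transpose]; exact hQ), frob_transpose]

lemma frob_orth [DecidableEq α] (Q : Matrix α α ℝ) (hQ : Qᵀ * Q = 1) :
    frob Q = Real.sqrt (Fintype.card α) := by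
  rw [frob]
  congr 1
  have : (∑ i, ∑ j, (Q i j) ^ 2) = Matrix.trace (Qᵀ * Q) := by
    rw [Finset.sum_comm, Matrix.trace]; simp [Matrix.mul_apply, sq]
  rw [this, hQ, Matrix.trace_one]

lemma frob_entrywise_le {X : Matrix α β ℝ} {Y : Matrix α β ℝ} {c : ℝ} (hc : 0 ≤ c)
    (h : ∀ i j, |X i j| ≤ c * |Y i j|) : frob X ≤ c * frob Y := by
  have h2 : frob X ^ 2 ≤ (c * frob Y) ^ 2 := by
    rw [frob_sq, mul_pow, frob_sq, Finset.mul_sum]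
    refine Finset.sum_le_sum fun i _ => ?_
    rw [Finset.mul_sum]
    refine Finset.sum_le_sum fun j _ => ?_
    calc (X i j) ^ 2 = |X i j| ^ 2 := (sq_abs _).symm
      _ ≤ (c * |Y i j|) ^ 2 := by
          exact pow_le_pow_left₀ (abs_nonneg _) (h i j) 2
      _ = c ^ 2 * (Y i j) ^ 2 := by rw [mul_pow, sq_abs]
  calc frob X = Real.sqrt (frob X ^ 2) := (Real.sqrt_sq (frob_nonneg X)).symm
    _ ≤ Real.sqrt ((c * frob Y) ^ 2) := Real.sqrt_le_sqrt h2
    _ = c * frob Y := Real.sqrt_sq (mul_nonneg hc (frob_nonneg Y))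

-- quadratic form bound
lemma dot_mulVec_le (E : Matrix α α ℝ) (x : α → ℝ) :
    x ⬝ᵥ (E *ᵥ x) ≤ frob E * (x ⬝ᵥ x) := by
  have expand : x ⬝ᵥ (E *ᵥ x) = ∑ p ∈ (Finset.univ ×ˢ Finset.univ : Finset (α × α)),
      (x p.1 * x p.2) * E p.1 p.2 := by
    rw [Finset.sum_product]
    simp only [dotProduct, Matrix.mulVec, dotProduct]
    refine Finset.sum_congr rfl fun i _ => ?_
    rw [Finset.mul_sum]
    refine Finset.sum_congr rfl fun j _ => by ring
  have key := Finset.sum_mul_sq_le_sq_mul_sq (Finset.univ ×ˢ Finset.univ : Finset (α × α))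
    (fun p => x p.1 * x p.2) (fun p => E p.1 p.2)
  have hf : ∑ p ∈ (Finset.univ ×ˢ Finset.univ : Finset (α × α)), (x p.1 * x p.2) ^ 2
      = (x ⬝ᵥ x) ^ 2 := by
    rw [Finset.sum_product]
    simp only [mul_pow, dotProduct, sq]
    rw [Finset.sum_mul_sum]
    refine Finset.sum_congr rfl fun i _ => Finset.sum_congr rfl fun j _ => by ring
  have hg : ∑ p ∈ (Finset.univ ×ˢ Finset.univ : Finset (α × α)), (E p.1 p.2) ^ 2
      = frob E ^ 2 := by rw [Finset.sum_product, frob_sq]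
  rw [hf, hg] at key
  have hxx : 0 ≤ x ⬝ᵥ x := by
    simp only [dotProduct]
    exact Finset.sum_nonneg fun i _ => mul_self_nonneg _
  calc x ⬝ᵥ (E *ᵥ x) ≤ |x ⬝ᵥ (E *ᵥ x)| := le_abs_self _
    _ = Real.sqrt ((x ⬝ᵥ (E *ᵥ x)) ^ 2) := (Real.sqrt_sq_eq_abs _).symm
    _ ≤ Real.sqrt ((x ⬝ᵥ x) ^ 2 * frob E ^ 2) := Real.sqrt_le_sqrt (by rw [expand]; exact key)
    _ = Real.sqrt ((x ⬝ᵥ x) ^ 2) * Real.sqrt (frob E ^ 2) := Real.sqrt_mul (by positivity) _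
    _ = (x ⬝ᵥ x) * frob E := by rw [Real.sqrt_sq hxx, Real.sqrt_sq (frob_nonneg E)]
    _ = frob E * (x ⬝ᵥ x) := mul_comm _ _



/-- eigenvalues of `M Mᵀ` -/
noncomputable def lamv (m l : ℕ) (σ : ℕ → ℝ) : Fin m → ℝ :=
  fun i => if (i : ℕ) < l then σ ((i : ℕ) + 1) ^ 2 else 0

lemma svdDiag_mul_transpose (m l : ℕ) (σ : ℕ → ℝ) :
    svdDiag m l σ * (svdDiag m l σ)ᵀ = Matrix.diagonal (lamv m l σ) := by
  ext i j
  rw [Matrix.mul_apply]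
  by_cases hij : i = j
  · subst hij
    rw [Matrix.diagonal_apply_eq]
    by_cases hil : (i : ℕ) < l
    · rw [Finset.sum_eq_single (⟨(i : ℕ), hil⟩ : Fin l)]
      · simp [svdDiag, lamv, hil, sq]
      · intro b _ hb
        have hne : ¬((i : ℕ) = (b : ℕ)) := fun h => hb (by apply Fin.ext; simp [← h])
        simp [svdDiag, hne]
      · simp
    · rw [Finset.sum_eq_zero]
      · simp [lamv, hil]
      · intro b _
        have : ¬((i : ℕ) = (b : ℕ)) := fun h => hil (h ▸ b.isLt)
        simp [svdDiag, this]
  · rw [Matrix.diagonal_apply_ne _ hij, Finset.sum_eq_zero]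
    intro b _
    by_cases h1 : (i : ℕ) = (b : ℕ)
    · have h2 : ¬((j : ℕ) = (b : ℕ)) := fun h2 => hij (by apply Fin.ext; omega)
      simp [svdDiag, h2]
    · simp [svdDiag, h1]

lemma spectral {m l : ℕ} {M : Matrix (Fin m) (Fin l) ℝ} {U σ V} (h : IsSVD M U σ V) :
    M * Mᵀ = U * Matrix.diagonal (lamv m l σ) * Uᵀ := by
  rw [h.hM]
  calc (U * svdDiag m l σ * Vᵀ) * (U * svdDiag m l σ * Vᵀ)ᵀ
      = U * (svdDiag m l σ * (Vᵀ * (V * ((svdDiag m l σ)ᵀ * Uᵀ)))) := by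
        simp only [Matrix.transpose_mul, Matrix.transpose_transpose, Matrix.mul_assoc]
    _ = U * (svdDiag m l σ * ((svdDiag m l σ)ᵀ * Uᵀ)) := by
        rw [← Matrix.mul_assoc Vᵀ V, h.hVl, Matrix.one_mul]
    _ = U * Matrix.diagonal (lamv m l σ) * Uᵀ := by
        rw [← svdDiag_mul_transpose m l σ]
        simp only [Matrix.mul_assoc]

lemma vecMul_eq_transpose_mulVec {m : ℕ} (U : Matrix (Fin m) (Fin m) ℝ) (x : Fin m → ℝ) :
    x ᵥ* U = Uᵀ *ᵥ x := by
  ext j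
  simp [Matrix.vecMul, Matrix.mulVec, dotProduct, mul_comm]

lemma quad_diag {m : ℕ} (U : Matrix (Fin m) (Fin m) ℝ) (d : Fin m → ℝ) (x : Fin m → ℝ) :
    x ⬝ᵥ ((U * Matrix.diagonal d * Uᵀ) *ᵥ x) = ∑ i, d i * ((Uᵀ *ᵥ x) i) ^ 2 := by
  rw [← Matrix.mulVec_mulVec, ← Matrix.mulVec_mulVec, dotProduct_mulVec x U,
    vecMul_eq_transpose_mulVec]
  simp only [dotProduct, Matrix.mulVec_diagonal]
  exact Finset.sum_congr rfl fun i _ => by ring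

lemma dot_self_orth {m : ℕ} {U : Matrix (Fin m) (Fin m) ℝ} (hUr : U * Uᵀ = 1) (x : Fin m → ℝ) :
    (Uᵀ *ᵥ x) ⬝ᵥ (Uᵀ *ᵥ x) = x ⬝ᵥ x := by
  have h1 : x ⬝ᵥ (U *ᵥ (Uᵀ *ᵥ x)) = (Uᵀ *ᵥ x) ⬝ᵥ (Uᵀ *ᵥ x) := by
    rw [dotProduct_mulVec x U, vecMul_eq_transpose_mulVec]
  rw [← h1, Matrix.mulVec_mulVec, hUr, Matrix.one_mulVec]

lemma exists_constrained (m p : ℕ) (hp1 : 1 ≤ p) (hpm : p ≤ m)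
    (Ut U : Matrix (Fin m) (Fin m) ℝ) :
    ∃ x : Fin m → ℝ, x ≠ 0 ∧ (∀ i : Fin m, p ≤ (i : ℕ) → (Utᵀ *ᵥ x) i = 0) ∧
      (∀ i : Fin m, (i : ℕ) < p - 1 → (Uᵀ *ᵥ x) i = 0) := by
  classical
  let f : (Fin m → ℝ) →ₗ[ℝ] (Fin (m - p) → ℝ) × (Fin (p - 1) → ℝ) :=
    LinearMap.prod
      (LinearMap.pi fun a : Fin (m - p) =>
        (LinearMap.proj (⟨p + (a : ℕ), by omega⟩ : Fin m)).comp (Matrix.mulVecLin Utᵀ))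
      (LinearMap.pi fun b : Fin (p - 1) =>
        (LinearMap.proj (⟨(b : ℕ), by omega⟩ : Fin m)).comp (Matrix.mulVecLin Uᵀ))
  have hrange : Module.finrank ℝ (LinearMap.range f) ≤ m - 1 := by
    have h1 := Submodule.finrank_le (LinearMap.range f)
    have h2 : Module.finrank ℝ ((Fin (m - p) → ℝ) × (Fin (p - 1) → ℝ)) = (m - p) + (p - 1) := by
      rw [Module.finrank_prod, Module.finrank_pi, Module.finrank_pi, Fintype.card_fin,
        Fintype.card_fin]
    omega
  have hker : LinearMap.ker f ≠ ⊥ := by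
    intro hbot
    have := LinearMap.finrank_range_add_finrank_ker f
    rw [hbot, finrank_bot, add_zero, Module.finrank_pi, Fintype.card_fin] at this
    omega
  obtain ⟨x, hxker, hx0⟩ := Submodule.ne_bot_iff _ |>.mp hker
  refine ⟨x, hx0, ?_, ?_⟩
  · intro i hi
    have h1 : (f x).1 = 0 := by rw [hxker]; rfl
    have := congrFun h1 ⟨(i : ℕ) - p, by omega⟩
    simpa only [f, LinearMap.prod_apply, LinearMap.pi_apply, LinearMap.comp_apply,
      LinearMap.proj_apply, Matrix.mulVecLin_apply, Pi.zero_apply, Function.prod,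
      (by apply Fin.ext; simp; omega : (⟨p + ((i : ℕ) - p), by omega⟩ : Fin m) = i)] using this
  · intro i hi
    have h2 : (f x).2 = 0 := by rw [hxker]; rfl
    have := congrFun h2 ⟨(i : ℕ), by omega⟩
    simpa only [f, LinearMap.prod_apply, LinearMap.pi_apply, LinearMap.comp_apply,
      LinearMap.proj_apply, Matrix.mulVecLin_apply, Pi.zero_apply, Function.prod,
      (by apply Fin.ext; simp : (⟨(i : ℕ), by omega⟩ : Fin m) = i)] using this


lemma dot_self_eq_sum_sq {m : ℕ} (x : Fin m → ℝ) : x ⬝ᵥ x = ∑ i, x i ^ 2 := by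
  simp [dotProduct, sq]

lemma weyl {m l : ℕ} {M M' : Matrix (Fin m) (Fin l) ℝ}
    {U Ut : Matrix (Fin m) (Fin m) ℝ} {σ σt : ℕ → ℝ} {V Vt : Matrix (Fin l) (Fin l) ℝ}
    (h : IsSVD M U σ V) (h' : IsSVD M' Ut σt Vt) {p : ℕ}
    (hp1 : 1 ≤ p) (hpl : p ≤ l) (hpm : p ≤ m) :
    σt p ^ 2 ≤ σ p ^ 2 + frob (M' * M'ᵀ - M * Mᵀ) := by
  obtain ⟨x, hx0, hz, hy⟩ := exists_constrained m p hp1 hpm Ut U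
  have hn2 : 0 < x ⬝ᵥ x := by
    rw [dot_self_eq_sum_sq]
    rcases Function.ne_iff.mp hx0 with ⟨i0, hi0⟩
    refine Finset.sum_pos' (fun i _ => sq_nonneg _) ⟨i0, Finset.mem_univ _, ?_⟩
    have : x i0 ≠ 0 := by simpa using hi0
    positivity
  have hq' : x ⬝ᵥ ((M' * M'ᵀ) *ᵥ x) = ∑ i, lamv m l σt i * ((Utᵀ *ᵥ x) i) ^ 2 := by
    rw [spectral h', quad_diag]
  have hq : x ⬝ᵥ ((M * Mᵀ) *ᵥ x) = ∑ i, lamv m l σ i * ((Uᵀ *ᵥ x) i) ^ 2 := by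
    rw [spectral h, quad_diag]
  have lower : σt p ^ 2 * (x ⬝ᵥ x) ≤ x ⬝ᵥ ((M' * M'ᵀ) *ᵥ x) := by
    rw [hq']
    have hzz : σt p ^ 2 * (x ⬝ᵥ x) = ∑ i, σt p ^ 2 * ((Utᵀ *ᵥ x) i) ^ 2 := by
      rw [← Finset.mul_sum, ← dot_self_eq_sum_sq, dot_self_orth h'.hUr]
    rw [hzz]
    refine Finset.sum_le_sum fun i _ => ?_
    by_cases hip : p ≤ (i : ℕ)
    · rw [hz i hip]; simp
    · push_neg at hip
      have hil : (i : ℕ) < l := lt_of_lt_of_le hip hpl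
      have hv : lamv m l σt i = σt ((i : ℕ) + 1) ^ 2 := if_pos hil
      rw [hv]
      have h1 : σt p ≤ σt ((i : ℕ) + 1) := h'.anti _ _ (by omega) (by omega)
      have h2 : 0 ≤ σt p := h'.nonneg p hp1
      exact mul_le_mul_of_nonneg_right (pow_le_pow_left₀ h2 h1 2) (sq_nonneg _)
  have upper : x ⬝ᵥ ((M * Mᵀ) *ᵥ x) ≤ σ p ^ 2 * (x ⬝ᵥ x) := by
    rw [hq]
    have hyy : σ p ^ 2 * (x ⬝ᵥ x) = ∑ i, σ p ^ 2 * ((Uᵀ *ᵥ x) i) ^ 2 := by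
      rw [← Finset.mul_sum, ← dot_self_eq_sum_sq, dot_self_orth h.hUr]
    rw [hyy]
    refine Finset.sum_le_sum fun i _ => ?_
    by_cases hip : (i : ℕ) < p - 1
    · rw [hy i hip]; simp
    · push_neg at hip
      by_cases hil : (i : ℕ) < l
      · have hv : lamv m l σ i = σ ((i : ℕ) + 1) ^ 2 := if_pos hil
        rw [hv]
        have h1 : σ ((i : ℕ) + 1) ≤ σ p := h.anti _ _ hp1 (by omega)
        have h2 : 0 ≤ σ ((i : ℕ) + 1) := h.nonneg _ (by omega)
        exact mul_le_mul_of_nonneg_right (pow_le_pow_left₀ h2 h1 2) (sq_nonneg _)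
      · have hv : lamv m l σ i = 0 := if_neg hil
        rw [hv, zero_mul]
        positivity
  have hpert : x ⬝ᵥ ((M' * M'ᵀ) *ᵥ x) - x ⬝ᵥ ((M * Mᵀ) *ᵥ x)
      ≤ frob (M' * M'ᵀ - M * Mᵀ) * (x ⬝ᵥ x) := by
    have := dot_mulVec_le (M' * M'ᵀ - M * Mᵀ) x
    rwa [Matrix.sub_mulVec, dotProduct_sub] at this
  have final : σt p ^ 2 * (x ⬝ᵥ x) ≤ (σ p ^ 2 + frob (M' * M'ᵀ - M * Mᵀ)) * (x ⬝ᵥ x) := by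
    nlinarith
  exact (mul_le_mul_iff_of_pos_right hn2).mp final

noncomputable def indv (m r' : ℕ) : Fin m → ℝ := fun i => if (i : ℕ) < r' then 1 else 0

lemma frob_sub_rev {α β : Type*} [Fintype α] [Fintype β] (A B : Matrix α β ℝ) :
    frob (A - B) = frob (B - A) := by
  rw [frob_eq_norm, frob_eq_norm, norm_sub_rev]

lemma le_twodiv_mul {d g t : ℝ} (hd : 0 < d) (hg : d / 2 ≤ g) (ht : 0 ≤ t) :
    t ≤ 2 / d * (g * t) := by
  have h1 : 1 ≤ 2 / d * g := by
    rw [div_mul_eq_mul_div, le_div_iff₀ hd]; linarith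
  calc t = 1 * t := (one_mul t).symm
    _ ≤ (2 / d * g) * t := mul_le_mul_of_nonneg_right h1 ht
    _ = 2 / d * (g * t) := mul_assoc _ _ _

lemma dk {m l : ℕ} {M M' : Matrix (Fin m) (Fin l) ℝ}
    {U Ut : Matrix (Fin m) (Fin m) ℝ} {σ σt : ℕ → ℝ} {V Vt : Matrix (Fin l) (Fin l) ℝ}
    (h : IsSVD M U σ V) (h' : IsSVD M' Ut σt Vt) {r' : ℕ}
    (hrl : r' ≤ l)
    (hδ : 0 < σ r' ^ 2 - σ (r' + 1) ^ 2)
    (hE : frob (M' * M'ᵀ - M * Mᵀ) ≤ (σ r' ^ 2 - σ (r' + 1) ^ 2) / 2) :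
    frob (Ut * Matrix.diagonal (indv m r') * Utᵀ - U * Matrix.diagonal (indv m r') * Uᵀ)
      ≤ (2 / (σ r' ^ 2 - σ (r' + 1) ^ 2)) * frob (M' * M'ᵀ - M * Mᵀ) := by
  classical
  set δ2 := σ r' ^ 2 - σ (r' + 1) ^ 2 with hδ2def
  set Eh := M' * M'ᵀ - M * Mᵀ with hEhdef
  set K := Utᵀ * U with hKdef
  set D := Matrix.diagonal (indv m r') with hDdef
  have hEhrev : frob (M * Mᵀ - M' * M'ᵀ) = frob Eh := frob_sub_rev _ _
  -- conjugation identities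
  have e1 : Utᵀ * (Ut * D * Utᵀ) * U = D * K := by
    calc Utᵀ * (Ut * D * Utᵀ) * U = (Utᵀ * Ut) * (D * (Utᵀ * U)) := by
          simp only [Matrix.mul_assoc]
      _ = D * K := by rw [h'.hUl, Matrix.one_mul]
  have e2 : Utᵀ * (U * D * Uᵀ) * U = K * D := by
    calc Utᵀ * (U * D * Uᵀ) * U = (Utᵀ * U) * (D * (Uᵀ * U)) := by
          simp only [Matrix.mul_assoc]
      _ = K * D := by rw [h.hUl, Matrix.mul_one]
  have e3 : Utᵀ * (M' * M'ᵀ) * U = Matrix.diagonal (lamv m l σt) * K := by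
    rw [spectral h']
    calc Utᵀ * (Ut * Matrix.diagonal (lamv m l σt) * Utᵀ) * U
        = (Utᵀ * Ut) * (Matrix.diagonal (lamv m l σt) * (Utᵀ * U)) := by
          simp only [Matrix.mul_assoc]
      _ = _ := by rw [h'.hUl, Matrix.one_mul]
  have e4 : Utᵀ * (M * Mᵀ) * U = K * Matrix.diagonal (lamv m l σ) := by
    rw [spectral h]
    calc Utᵀ * (U * Matrix.diagonal (lamv m l σ) * Uᵀ) * U
        = (Utᵀ * U) * (Matrix.diagonal (lamv m l σ) * (Uᵀ * U)) := by
          simp only [Matrix.mul_assoc]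
      _ = _ := by rw [h.hUl, Matrix.mul_one]
  have hconj : Utᵀ * (Ut * D * Utᵀ - U * D * Uᵀ) * U = D * K - K * D := by
    rw [Matrix.mul_sub, Matrix.sub_mul, e1, e2]
  have hFh : Utᵀ * Eh * U = Matrix.diagonal (lamv m l σt) * K - K * Matrix.diagonal (lamv m l σ) := by
    rw [hEhdef, Matrix.mul_sub, Matrix.sub_mul, e3, e4]
  -- frobenius norm invariance under the conjugations
  have hUtorth : (Utᵀ)ᵀ * Utᵀ = 1 := by rw [Matrix.transpose_transpose]; exact h'.hUr
  have hfrob1 : frob (D * K - K * D)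
      = frob (Ut * D * Utᵀ - U * D * Uᵀ) := by
    rw [← hconj, Matrix.mul_assoc, frob_orth_left hUtorth, frob_orth_right h.hUr]
  have hfrob2 : frob (Utᵀ * Eh * U) = frob Eh := by
    rw [Matrix.mul_assoc, frob_orth_left hUtorth, frob_orth_right h.hUr]
  -- entrywise bound
  have hent : ∀ i j, |(D * K - K * D) i j|
      ≤ (2 / δ2) * |(Utᵀ * Eh * U) i j| := by
    intro i j
    have hFij : (Utᵀ * Eh * U) i j
        = (lamv m l σt i - lamv m l σ j) * K i j := by
      rw [hFh]
      simp only [Matrix.sub_apply, Matrix.diagonal_mul, Matrix.mul_diagonal]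
      ring
    have hDij : (D * K - K * D) i j = (indv m r' i - indv m r' j) * K i j := by
      simp only [hDdef, Matrix.sub_apply, Matrix.diagonal_mul, Matrix.mul_diagonal]
      ring
    have hrhs0 : 0 ≤ (2 / δ2) * |(Utᵀ * Eh * U) i j| := by positivity
    by_cases hi : (i : ℕ) < r' <;> by_cases hj : (j : ℕ) < r'
    · rw [hDij]; simp [indv, hi, hj, hrhs0]
    · -- i < r' ≤ j : gap from below on lamt i, above on lam j
      have hr1 : 1 ≤ r' := by omega
      have hrm : r' ≤ m := le_trans (le_of_not_gt hj) (le_of_lt j.isLt)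
      have hwl : σ r' ^ 2 ≤ σt r' ^ 2 + frob Eh := by
        have := weyl h' h (p := r') hr1 hrl hrm
        rwa [hEhrev] at this
      have hai : σt r' ^ 2 ≤ lamv m l σt i := by
        have hil : (i : ℕ) < l := lt_of_lt_of_le hi hrl
        have hv : lamv m l σt i = σt ((i : ℕ) + 1) ^ 2 := if_pos hil
        rw [hv]
        exact pow_le_pow_left₀ (h'.nonneg _ hr1) (h'.anti _ _ (by omega) (by omega)) 2
      have hbj : lamv m l σ j ≤ σ (r' + 1) ^ 2 := by
        by_cases hjl : (j : ℕ) < l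
        · have hv : lamv m l σ j = σ ((j : ℕ) + 1) ^ 2 := if_pos hjl
          rw [hv]
          exact pow_le_pow_left₀ (h.nonneg _ (by omega)) (h.anti _ _ (by omega) (by omega)) 2
        · have hv : lamv m l σ j = 0 := if_neg hjl
          rw [hv]; positivity
      have hgapab : δ2 / 2 ≤ lamv m l σt i - lamv m l σ j := by
        have hfe : frob Eh ≤ δ2 / 2 := hE
        linarith
      have habs : |(Utᵀ * Eh * U) i j| = (lamv m l σt i - lamv m l σ j) * |K i j| := by
        rw [hFij, abs_mul, abs_of_pos (lt_of_lt_of_le (by linarith) hgapab)]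
      have hLHS : |(D * K - K * D) i j| = |K i j| := by
        rw [hDij]; simp [indv, hi, hj]
      rw [hLHS, habs]
      exact le_twodiv_mul hδ hgapab (abs_nonneg (K i j))
    · -- j < r' ≤ i
      have hr1 : 1 ≤ r' := by omega
      have hbj : σ r' ^ 2 ≤ lamv m l σ j := by
        have hjl : (j : ℕ) < l := lt_of_lt_of_le hj hrl
        have hv : lamv m l σ j = σ ((j : ℕ) + 1) ^ 2 := if_pos hjl
        rw [hv]
        exact pow_le_pow_left₀ (h.nonneg _ hr1) (h.anti _ _ (by omega) (by omega)) 2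
      have hai : lamv m l σt i ≤ σ (r' + 1) ^ 2 + frob Eh := by
        by_cases hil : (i : ℕ) < l
        · have hv : lamv m l σt i = σt ((i : ℕ) + 1) ^ 2 := if_pos hil
          rw [hv]
          have h1 : σt ((i : ℕ) + 1) ^ 2 ≤ σt (r' + 1) ^ 2 :=
            pow_le_pow_left₀ (h'.nonneg _ (by omega)) (h'.anti _ _ (by omega) (by omega)) 2
          have h2 : σt (r' + 1) ^ 2 ≤ σ (r' + 1) ^ 2 + frob Eh :=
            weyl h h' (p := r' + 1) (by omega) (by omega) (by
              have := i.isLt; omega)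
          linarith
        · have hv : lamv m l σt i = 0 := if_neg hil
          rw [hv]
          have := frob_nonneg Eh
          positivity
      have hgapab : δ2 / 2 ≤ lamv m l σ j - lamv m l σt i := by
        have hfe : frob Eh ≤ δ2 / 2 := hE
        linarith
      have habs : |(Utᵀ * Eh * U) i j| = (lamv m l σ j - lamv m l σt i) * |K i j| := by
        rw [hFij, ← abs_neg, neg_mul_eq_neg_mul, neg_sub, abs_mul,
          abs_of_pos (lt_of_lt_of_le (by linarith) hgapab)]
      have hLHS : |(D * K - K * D) i j| = |K i j| := by
        rw [hDij]
        simp only [indv, if_pos hj, if_neg hi]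
        rw [zero_sub, neg_mul, abs_neg, one_mul]
      rw [hLHS, habs]
      exact le_twodiv_mul hδ hgapab (abs_nonneg (K i j))
    · rw [hDij]; simp [indv, hi, hj, hrhs0]
  have := frob_entrywise_le (by positivity : (0:ℝ) ≤ 2 / δ2) hent
  rw [hfrob1, hfrob2] at this
  exact this

lemma frob_add_le {α β : Type*} [Fintype α] [Fintype β] (A B : Matrix α β ℝ) :
    frob (A + B) ≤ frob A + frob B := by
  rw [frob_eq_norm, frob_eq_norm, frob_eq_norm]; exact norm_add_le A B

lemma inv_perturb {k : ℕ} {G G' : Matrix (Fin k) (Fin k) ℝ} {c : ℝ}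
    (hG : IsUnit G.det) (hc : frob G⁻¹ ≤ c) (hc1 : 0 < c)
    (hd : frob (G' - G) ≤ 1 / (2 * c)) :
    IsUnit G'.det ∧ frob (G'⁻¹ - G⁻¹) ≤ 2 * c ^ 2 * frob (G' - G) ∧ frob G'⁻¹ ≤ 2 * c := by
  classical
  haveI : CompleteSpace (Matrix (Fin k) (Fin k) ℝ) := FiniteDimensional.complete ℝ _
  have hGu : IsUnit G := (Matrix.isUnit_iff_isUnit_det G).mpr hG
  set X := G⁻¹ * (G - G') with hXdef
  have hXnorm : ‖X‖ < 1 := by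
    have h1 : ‖X‖ ≤ ‖G⁻¹‖ * ‖G - G'‖ := norm_mul_le _ _
    have h2 : ‖G - G'‖ = frob (G' - G) := by rw [norm_sub_rev, frob_eq_norm]
    have h3 : ‖G⁻¹‖ = frob G⁻¹ := (frob_eq_norm _).symm
    have hcd : frob G⁻¹ * frob (G' - G) ≤ c * (1 / (2 * c)) :=
      mul_le_mul hc hd (frob_nonneg _) hc1.le
    have : c * (1 / (2 * c)) = 1 / 2 := by field_simp
    calc ‖X‖ ≤ ‖G⁻¹‖ * ‖G - G'‖ := h1
      _ = frob G⁻¹ * frob (G' - G) := by rw [h2, h3]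
      _ ≤ 1 / 2 := by rw [← this]; exact hcd
      _ < 1 := by norm_num
  have hunit : IsUnit (1 - X) := (Units.oneSub X hXnorm).isUnit
  have hGGinv : G * G⁻¹ = 1 := Matrix.mul_nonsing_inv G hG
  have hfact : G * (1 - X) = G' := by
    rw [Matrix.mul_sub, Matrix.mul_one, hXdef, ← Matrix.mul_assoc, hGGinv, Matrix.one_mul]
    abel
  have hG'u : IsUnit G' := by rw [← hfact]; exact hGu.mul hunit
  have hG'det : IsUnit G'.det := (Matrix.isUnit_iff_isUnit_det G').mp hG'u
  have hG'inv : G'⁻¹ * G' = 1 := Matrix.nonsing_inv_mul G' hG'det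
  have hident : G'⁻¹ - G⁻¹ = G'⁻¹ * (G - G') * G⁻¹ := by
    have e : G'⁻¹ * (G - G') * G⁻¹ = G'⁻¹ * (G * G⁻¹) - G'⁻¹ * G' * G⁻¹ := by
      noncomm_ring
    rw [e, hGGinv, hG'inv, Matrix.mul_one, Matrix.one_mul]
  have hdiffbound : ∀ u : ℝ, frob G'⁻¹ ≤ u →
      frob (G'⁻¹ - G⁻¹) ≤ u * frob (G' - G) * c := by
    intro u hu
    rw [hident]
    calc frob (G'⁻¹ * (G - G') * G⁻¹) ≤ frob (G'⁻¹ * (G - G')) * frob G⁻¹ := frob_mul_le _ _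
      _ ≤ frob G'⁻¹ * frob (G - G') * frob G⁻¹ :=
          mul_le_mul_of_nonneg_right (frob_mul_le _ _) (frob_nonneg _)
      _ ≤ u * frob (G' - G) * c := by
          rw [frob_sub_rev G G']
          exact mul_le_mul (mul_le_mul_of_nonneg_right hu (frob_nonneg _)) hc (frob_nonneg _)
            (mul_nonneg (le_trans (frob_nonneg _) hu) (frob_nonneg _))
  have hubound : frob G'⁻¹ ≤ 2 * c := by
    by_contra hcon
    push_neg at hcon
    have h1 : frob G'⁻¹ ≤ frob G⁻¹ + frob (G'⁻¹ - G⁻¹) := by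
      have h0 : G'⁻¹ - G⁻¹ + G⁻¹ = G'⁻¹ := by abel
      have := frob_add_le (G'⁻¹ - G⁻¹) G⁻¹
      rw [h0] at this
      linarith
    have h2 := hdiffbound (frob G'⁻¹) le_rfl
    have h3 : frob (G' - G) * c ≤ 1 / 2 := by
      calc frob (G' - G) * c ≤ (1 / (2 * c)) * c := mul_le_mul_of_nonneg_right hd hc1.le
        _ = 1 / 2 := by field_simp
    have h4 : frob G'⁻¹ * (frob (G' - G) * c) ≤ frob G'⁻¹ * (1 / 2) :=
      mul_le_mul_of_nonneg_left h3 (frob_nonneg _)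
    have h5 : frob G'⁻¹ * frob (G' - G) * c = frob G'⁻¹ * (frob (G' - G) * c) :=
      mul_assoc _ _ _
    linarith
  refine ⟨hG'det, ?_, hubound⟩
  have := hdiffbound (2 * c) hubound
  calc frob (G'⁻¹ - G⁻¹) ≤ 2 * c * frob (G' - G) * c := this
    _ = 2 * c ^ 2 * frob (G' - G) := by ring

lemma projCol_lip {m k : ℕ} {A B : Matrix (Fin m) (Fin k) ℝ} {c : ℝ}
    (hG : IsUnit (Aᵀ * A).det) (hc : frob (Aᵀ * A)⁻¹ ≤ c) (hc1 : 0 < c)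
    (hd1 : frob (B - A) ≤ 1)
    (hd2 : frob (B - A) ≤ 1 / (2 * c * (2 * frob A + 1))) :
    frob (projCol B - projCol A)
      ≤ (2 * c * (frob A + 1) + frob A * (2 * c ^ 2 * (2 * frob A + 1)) * (frob A + 1)
          + frob A * c) * frob (B - A) := by
  classical
  set d := frob (B - A) with hddef
  have hd0 : 0 ≤ d := frob_nonneg _
  have hB : frob B ≤ frob A + 1 := by
    have h1 : B = A + (B - A) := by abel
    calc frob B = frob (A + (B - A)) := by rw [← h1]
      _ ≤ frob A + d := frob_add_le _ _
      _ ≤ frob A + 1 := by linarith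
  set G := Aᵀ * A with hGdef
  set G' := Bᵀ * B with hG'def
  have hGG' : G' - G = Bᵀ * (B - A) + (B - A)ᵀ * A := by
    rw [hG'def, hGdef, Matrix.transpose_sub, Matrix.mul_sub, Matrix.sub_mul]
    abel
  have hb1 : 0 < 2 * frob A + 1 := by have := frob_nonneg A; linarith
  have hGd : frob (G' - G) ≤ (2 * frob A + 1) * d := by
    rw [hGG']
    calc frob (Bᵀ * (B - A) + (B - A)ᵀ * A)
        ≤ frob (Bᵀ * (B - A)) + frob ((B - A)ᵀ * A) := frob_add_le _ _
      _ ≤ frob Bᵀ * frob (B - A) + frob (B - A)ᵀ * frob A := by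
          have := frob_mul_le Bᵀ (B - A)
          have := frob_mul_le (B - A)ᵀ A
          linarith
      _ = frob B * d + d * frob A := by rw [frob_transpose, frob_transpose]
      _ ≤ (2 * frob A + 1) * d := by nlinarith [frob_nonneg A]
  have hGdsmall : frob (G' - G) ≤ 1 / (2 * c) := by
    calc frob (G' - G) ≤ (2 * frob A + 1) * d := hGd
      _ ≤ (2 * frob A + 1) * (1 / (2 * c * (2 * frob A + 1))) :=
          mul_le_mul_of_nonneg_left hd2 hb1.le
      _ = 1 / (2 * c) := by field_simp
  obtain ⟨hG'det, hinvdiff, hinvbound⟩ := inv_perturb hG hc hc1 hGdsmall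
  have hdecomp : projCol B - projCol A
      = (B - A) * G'⁻¹ * Bᵀ + A * (G'⁻¹ - G⁻¹) * Bᵀ + A * G⁻¹ * (B - A)ᵀ := by
    simp only [projCol, ← hGdef, ← hG'def]
    simp only [Matrix.sub_mul, Matrix.mul_sub, Matrix.transpose_sub]
    abel
  have t1 : frob ((B - A) * G'⁻¹ * Bᵀ) ≤ d * (2 * c) * (frob A + 1) := by
    calc frob ((B - A) * G'⁻¹ * Bᵀ) ≤ frob ((B - A) * G'⁻¹) * frob Bᵀ := frob_mul_le _ _
      _ ≤ frob (B - A) * frob G'⁻¹ * frob Bᵀ :=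
          mul_le_mul_of_nonneg_right (frob_mul_le _ _) (frob_nonneg _)
      _ ≤ d * (2 * c) * (frob A + 1) := by
          rw [frob_transpose]
          exact mul_le_mul (mul_le_mul le_rfl hinvbound (frob_nonneg _) hd0)
            hB (frob_nonneg _) (mul_nonneg hd0 (by positivity))
  have t2 : frob (A * (G'⁻¹ - G⁻¹) * Bᵀ)
      ≤ frob A * (2 * c ^ 2 * ((2 * frob A + 1) * d)) * (frob A + 1) := by
    calc frob (A * (G'⁻¹ - G⁻¹) * Bᵀ) ≤ frob (A * (G'⁻¹ - G⁻¹)) * frob Bᵀ := frob_mul_le _ _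
      _ ≤ frob A * frob (G'⁻¹ - G⁻¹) * frob Bᵀ :=
          mul_le_mul_of_nonneg_right (frob_mul_le _ _) (frob_nonneg _)
      _ ≤ frob A * (2 * c ^ 2 * ((2 * frob A + 1) * d)) * (frob A + 1) := by
          rw [frob_transpose]
          refine mul_le_mul (mul_le_mul le_rfl ?_ (frob_nonneg _) (frob_nonneg _))
            hB (frob_nonneg _) (mul_nonneg (frob_nonneg _)
              (mul_nonneg (by positivity) (mul_nonneg hb1.le hd0)))
          calc frob (G'⁻¹ - G⁻¹) ≤ 2 * c ^ 2 * frob (G' - G) := hinvdiff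
            _ ≤ 2 * c ^ 2 * ((2 * frob A + 1) * d) := by
                exact mul_le_mul_of_nonneg_left hGd (by positivity)
  have t3 : frob (A * G⁻¹ * (B - A)ᵀ) ≤ frob A * c * d := by
    calc frob (A * G⁻¹ * (B - A)ᵀ) ≤ frob (A * G⁻¹) * frob (B - A)ᵀ := frob_mul_le _ _
      _ ≤ frob A * frob G⁻¹ * frob (B - A)ᵀ :=
          mul_le_mul_of_nonneg_right (frob_mul_le _ _) (frob_nonneg _)
      _ ≤ frob A * c * d := by
          rw [frob_transpose]
          exact mul_le_mul (mul_le_mul le_rfl hc (frob_nonneg _) (frob_nonneg _))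
            le_rfl hd0 (mul_nonneg (frob_nonneg _) hc1.le)
  calc frob (projCol B - projCol A)
      = frob ((B - A) * G'⁻¹ * Bᵀ + A * (G'⁻¹ - G⁻¹) * Bᵀ + A * G⁻¹ * (B - A)ᵀ) := by
        rw [hdecomp]
    _ ≤ frob ((B - A) * G'⁻¹ * Bᵀ + A * (G'⁻¹ - G⁻¹) * Bᵀ) + frob (A * G⁻¹ * (B - A)ᵀ) :=
        frob_add_le _ _
    _ ≤ frob ((B - A) * G'⁻¹ * Bᵀ) + frob (A * (G'⁻¹ - G⁻¹) * Bᵀ) + frob (A * G⁻¹ * (B - A)ᵀ) := by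
        have := frob_add_le ((B - A) * G'⁻¹ * Bᵀ) (A * (G'⁻¹ - G⁻¹) * Bᵀ)
        linarith
    _ ≤ d * (2 * c) * (frob A + 1) + frob A * (2 * c ^ 2 * ((2 * frob A + 1) * d)) * (frob A + 1)
        + frob A * c * d := by linarith
    _ = (2 * c * (frob A + 1) + frob A * (2 * c ^ 2 * (2 * frob A + 1)) * (frob A + 1)
        + frob A * c) * d := by ring

lemma frob_zero {α β : Type*} [Fintype α] [Fintype β] : frob (0 : Matrix α β ℝ) = 0 := by
  rw [frob_eq_norm, norm_zero]

lemma isUnit_det_of_rank {m k : ℕ} {A : Matrix (Fin m) (Fin k) ℝ} (h : A.rank = k) :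
    IsUnit (Aᵀ * A).det := by
  have hr : (Aᵀ * A).rank = k := by rw [Matrix.rank_transpose_mul_self]; exact h
  rw [← Matrix.isUnit_iff_isUnit_det, ← Matrix.mulVec_injective_iff_isUnit]
  rw [← Matrix.coe_mulVecLin]
  rw [← LinearMap.ker_eq_bot]
  have h1 := LinearMap.finrank_range_add_finrank_ker (Matrix.mulVecLin (Aᵀ * A))
  have h2 : Module.finrank ℝ (LinearMap.range (Matrix.mulVecLin (Aᵀ * A))) = k := hr
  rw [Module.finrank_pi, Fintype.card_fin, h2] at h1
  have h3 : Module.finrank ℝ (LinearMap.ker (Matrix.mulVecLin (Aᵀ * A))) = 0 := by omega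
  exact Submodule.finrank_eq_zero.mp h3

lemma diag_ind_mul_svdDiag (m l r' : ℕ) (σ : ℕ → ℝ) :
    Matrix.diagonal (indv m r') * svdDiag m l σ = svdTrunc m l r' σ := by
  ext i j
  rw [Matrix.diagonal_mul]
  simp only [indv, svdDiag, svdTrunc, Matrix.of_apply]
  by_cases h1 : (i : ℕ) < r' <;> by_cases h2 : (i : ℕ) = (j : ℕ) <;> simp [h1, h2]

lemma trunc_eq_proj {m l : ℕ} {M : Matrix (Fin m) (Fin l) ℝ} {U σ V} (h : IsSVD M U σ V)
    (r' : ℕ) :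
    U * svdTrunc m l r' σ * Vᵀ = (U * Matrix.diagonal (indv m r') * Uᵀ) * M := by
  rw [h.hM]
  calc U * svdTrunc m l r' σ * Vᵀ
      = U * (Matrix.diagonal (indv m r') * (svdDiag m l σ * Vᵀ)) := by
        rw [← diag_ind_mul_svdDiag m l r' σ]
        simp only [Matrix.mul_assoc]
    _ = U * (Matrix.diagonal (indv m r') * ((Uᵀ * U) * (svdDiag m l σ * Vᵀ))) := by
        rw [h.hUl, Matrix.one_mul]
    _ = (U * Matrix.diagonal (indv m r') * Uᵀ) * (U * svdDiag m l σ * Vᵀ) := by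
        simp only [Matrix.mul_assoc]

lemma frob_diag_ind (m r' : ℕ) : frob (Matrix.diagonal (indv m r')) ≤ Real.sqrt m := by
  rw [frob]
  apply Real.sqrt_le_sqrt
  have h1 : ∀ i j : Fin m, (Matrix.diagonal (indv m r') i j) ^ 2
      ≤ (if i = j then (1 : ℝ) else 0) := by
    intro i j
    by_cases hij : i = j
    · subst hij
      rw [Matrix.diagonal_apply_eq, if_pos rfl]
      simp only [indv]
      by_cases h : (i : ℕ) < r' <;> simp [h]
    · rw [Matrix.diagonal_apply_ne _ hij, if_neg hij]
      simp
  calc ∑ i, ∑ j, (Matrix.diagonal (indv m r') i j) ^ 2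
      ≤ ∑ i : Fin m, ∑ j : Fin m, (if i = j then (1 : ℝ) else 0) :=
        Finset.sum_le_sum fun i _ => Finset.sum_le_sum fun j _ => h1 i j
    _ = ∑ i : Fin m, 1 := by
        refine Finset.sum_congr rfl fun i _ => ?_
        rw [Finset.sum_ite_eq Finset.univ i (fun _ => (1:ℝ))]
        simp
    _ = (m : ℝ) := by simp

lemma proj_frob_le {m : ℕ} {Ut : Matrix (Fin m) (Fin m) ℝ} (hUl : Utᵀ * Ut = 1) (r' : ℕ) :
    frob (Ut * Matrix.diagonal (indv m r') * Utᵀ) ≤ (m : ℝ) := by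
  have h1 : frob (Ut * (Matrix.diagonal (indv m r') * Utᵀ))
      = frob (Matrix.diagonal (indv m r') * Utᵀ) := frob_orth_left hUl _
  rw [Matrix.mul_assoc, h1]
  calc frob (Matrix.diagonal (indv m r') * Utᵀ)
      ≤ frob (Matrix.diagonal (indv m r')) * frob Utᵀ := frob_mul_le _ _
    _ ≤ Real.sqrt m * Real.sqrt m := by
        refine mul_le_mul (frob_diag_ind m r') ?_ (frob_nonneg _) (Real.sqrt_nonneg _)
        rw [frob_transpose, frob_orth Ut hUl, Fintype.card_fin]
    _ = (m : ℝ) := Real.mul_self_sqrt (Nat.cast_nonneg m)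

lemma hadamard_lower {m k : ℕ} (A W : Matrix (Fin m) (Fin k) ℝ) {lam : ℝ}
    (hW : ∀ i j, lam ≤ W i j) (hlam : 0 ≤ lam) :
    lam ^ 2 * frob A ^ 2 ≤ frob (Matrix.hadamard A W) ^ 2 := by
  rw [frob_sq, frob_sq, Finset.mul_sum]
  refine Finset.sum_le_sum fun i _ => ?_
  rw [Finset.mul_sum]
  refine Finset.sum_le_sum fun j _ => ?_
  rw [Matrix.hadamard_apply, mul_pow]
  have h1 : lam ^ 2 ≤ W i j ^ 2 := pow_le_pow_left₀ hlam (hW i j) 2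
  nlinarith [sq_nonneg (A i j)]

lemma hadamard_upper {m k : ℕ} (A W : Matrix (Fin m) (Fin k) ℝ) {ρ : ℝ}
    (hW : ∀ i j, |W i j| ≤ ρ) :
    frob (Matrix.hadamard A W) ^ 2 ≤ ρ ^ 2 * frob A ^ 2 := by
  rw [frob_sq, frob_sq, Finset.mul_sum]
  refine Finset.sum_le_sum fun i _ => ?_
  rw [Finset.mul_sum]
  refine Finset.sum_le_sum fun j _ => ?_
  rw [Matrix.hadamard_apply, mul_pow]
  have h1 : W i j ^ 2 ≤ ρ ^ 2 := by
    rw [← sq_abs]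
    exact pow_le_pow_left₀ (abs_nonneg _) (hW i j) 2
  nlinarith [sq_nonneg (A i j)]

end Stmt8

open Stmt8

set_option maxHeartbeats 1600000 in
/-- **Lemma 3.8.** With `𝒜 = P⊥_{A1}(A2)` having a singular value gap
`σ_{r-k} > σ_{r-k+1}`, and `𝒜̃ = P⊥_{X̃1(W)}(A2)` for minimizers `(X̃1(W) X̃2(W))` of the
weighted problem (`W1` positive, `W2` bounded by `ρ`),
`‖H_{r-k}(𝒜̃) − H_{r-k}(𝒜)‖ = O(1/λ)` as `λ = min_{i,j}(W1)_{ij} → ∞`. -/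
theorem stmt_8 {m k l : ℕ}
    (A1 : Matrix (Fin m) (Fin k) ℝ) (A2 : Matrix (Fin m) (Fin l) ℝ)
    (r : ℕ) (hrank : A1.rank = k) (hkr : k ≤ r) (hrmn : r ≤ min m (k + l))
    (U : Matrix (Fin m) (Fin m) ℝ) (σ : ℕ → ℝ) (V : Matrix (Fin l) (Fin l) ℝ)
    (hsvd : IsSVD ((1 - projCol A1) * A2) U σ V)
    (hgap : σ (r - k + 1) < σ (r - k))
    (ρ : ℝ) (hρ : 0 < ρ) :
    ∃ C > (0 : ℝ), ∃ lam0 > (0 : ℝ),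
      ∀ (W1 : Matrix (Fin m) (Fin k) ℝ) (W2 : Matrix (Fin m) (Fin l) ℝ) (lam : ℝ)
        (X1 : Matrix (Fin m) (Fin k) ℝ) (X2 : Matrix (Fin m) (Fin l) ℝ),
        (∀ i j, 0 < W1 i j) → (∀ i j, |W2 i j| ≤ ρ) →
        (∀ i j, lam ≤ W1 i j) → (∃ i j, W1 i j = lam) → lam0 ≤ lam →
        ((Matrix.fromCols X1 X2).rank ≤ r ∧
          ∀ (Y1 : Matrix (Fin m) (Fin k) ℝ) (Y2 : Matrix (Fin m) (Fin l) ℝ),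
            (Matrix.fromCols Y1 Y2).rank ≤ r →
            frob (Matrix.hadamard (A1 - X1) W1) ^ 2 +
                frob (Matrix.hadamard (A2 - X2) W2) ^ 2 ≤
              frob (Matrix.hadamard (A1 - Y1) W1) ^ 2 +
                frob (Matrix.hadamard (A2 - Y2) W2) ^ 2) →
        ∀ (Ut : Matrix (Fin m) (Fin m) ℝ) (σt : ℕ → ℝ) (Vt : Matrix (Fin l) (Fin l) ℝ),
          IsSVD ((1 - projCol X1) * A2) Ut σt Vt →
          frob (Ut * svdTrunc m l (r - k) σt * Vtᵀ - U * svdTrunc m l (r - k) σ * Vᵀ) ≤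
            C / lam := by
  classical
  by_cases hr0 : r - k = 0
  · refine ⟨1, one_pos, 1, one_pos, ?_⟩
    intro W1 W2 lam X1 X2 _ _ _ _ hlam0 _ Ut σt Vt _
    have hlampos : (0:ℝ) < lam := lt_of_lt_of_le one_pos hlam0
    have hz1 : svdTrunc m l (r - k) σt = 0 := by
      ext i j; simp [svdTrunc, hr0]
    have hz2 : svdTrunc m l (r - k) σ = 0 := by
      ext i j; simp [svdTrunc, hr0]
    rw [hz1, hz2, Matrix.mul_zero, Matrix.zero_mul, Matrix.mul_zero, Matrix.zero_mul,
      sub_zero, frob_zero]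
    positivity
  -- main case
  set r' := r - k with hr'def
  have hr1 : 1 ≤ r' := by omega
  have hrl : r' ≤ l := by
    have := le_trans hrmn (min_le_right m (k + l)); omega
  set M := (1 - projCol A1) * A2 with hMdef
  have hGdet : IsUnit (A1ᵀ * A1).det := isUnit_det_of_rank hrank
  set b := frob A1 with hbdef
  have hb0 : 0 ≤ b := frob_nonneg _
  set a2 := frob A2 with ha2def
  have ha20 : 0 ≤ a2 := frob_nonneg _
  set c := frob (A1ᵀ * A1)⁻¹ + 1 with hcdef
  have hc : frob (A1ᵀ * A1)⁻¹ ≤ c := by rw [hcdef]; linarith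
  have hc1 : 0 < c := by
    have := frob_nonneg (A1ᵀ * A1)⁻¹; rw [hcdef]; linarith
  set L := 2 * c * (b + 1) + b * (2 * c ^ 2 * (2 * b + 1)) * (b + 1) + b * c with hLdef
  have hb1 : (0:ℝ) ≤ 2 * b + 1 := by linarith
  have hbp1 : (0:ℝ) ≤ b + 1 := by linarith
  have hL0 : 0 ≤ L := by
    have h1 : 0 ≤ 2 * c * (b + 1) := mul_nonneg (by linarith) hbp1
    have h2 : 0 ≤ b * (2 * c ^ 2 * (2 * b + 1)) * (b + 1) :=
      mul_nonneg (mul_nonneg hb0 (mul_nonneg (by positivity) hb1)) hbp1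
    have h3 : 0 ≤ b * c := mul_nonneg hb0 hc1.le
    rw [hLdef]; linarith
  have hden : 0 < 2 * c * (2 * b + 1) := mul_pos (by linarith) (by linarith)
  set ε1 := min 1 (1 / (2 * c * (2 * b + 1))) with hε1def
  have hεpos : 0 < ε1 := lt_min one_pos (div_pos one_pos hden)
  set m0 := frob M with hm0def
  have hm00 : 0 ≤ m0 := frob_nonneg _
  set δ2 := σ r' ^ 2 - σ (r' + 1) ^ 2 with hδ2def
  have hδ2 : 0 < δ2 := by
    have h1 : 0 ≤ σ (r' + 1) := hsvd.nonneg _ (by omega)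
    have h2 : σ (r' + 1) < σ r' := hgap
    rw [hδ2def]; nlinarith
  set num := L * a2 * ρ * a2 with hnumdef
  have hnum0 : 0 ≤ num := by
    rw [hnumdef]
    exact mul_nonneg (mul_nonneg (mul_nonneg hL0 ha20) hρ.le) ha20
  set K2 := (m : ℝ) + (2 / δ2) * ((2 * m0 + 1) * m0) with hK2def
  have hK20 : 0 ≤ K2 := by
    have h1 : 0 ≤ (2 / δ2) := by positivity
    have h2 : 0 ≤ (2 * m0 + 1) * m0 := mul_nonneg (by linarith) hm00
    have h3 : (0:ℝ) ≤ (m : ℝ) := Nat.cast_nonneg m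
    rw [hK2def]
    have := mul_nonneg h1 h2
    linarith
  refine ⟨K2 * num + 1, by have := mul_nonneg hK20 hnum0; linarith,
    max (max 1 (ρ * a2 / ε1))
    (max (2 * (2 * m0 + 1) * num / δ2 + 1) (num + 1)),
    lt_of_lt_of_le one_pos (le_trans (le_max_left _ _) (le_max_left _ _)), ?_⟩
  intro W1 W2 lam X1 X2 hW1pos hW2 hWlam hWex hlam0le hminpair Ut σt Vt hsvdt
  obtain ⟨hrankX, hmin⟩ := hminpair
  have hlam1 : (1:ℝ) ≤ lam :=
    le_trans (le_trans (le_max_left _ _) (le_max_left _ _)) hlam0le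
  have hlampos : (0:ℝ) < lam := lt_of_lt_of_le one_pos hlam1
  -- Step A : the rank of (A1 | 0)
  have hfc : (Matrix.fromCols A1 (0 : Matrix (Fin m) (Fin l) ℝ)).rank ≤ r := by
    have he : Matrix.fromCols A1 (0 : Matrix (Fin m) (Fin l) ℝ)
        = A1 * Matrix.fromCols (1 : Matrix (Fin k) (Fin k) ℝ)
          (0 : Matrix (Fin k) (Fin l) ℝ) := by
      rw [Matrix.mul_fromCols, Matrix.mul_one, Matrix.mul_zero]
    rw [he]
    calc (A1 * Matrix.fromCols (1 : Matrix (Fin k) (Fin k) ℝ)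
          (0 : Matrix (Fin k) (Fin l) ℝ)).rank
        ≤ A1.rank := Matrix.rank_mul_le_left _ _
      _ = k := hrank
      _ ≤ r := hkr
  -- Step B : compare with the feasible point (A1, 0)
  have hobj := hmin A1 0 hfc
  have hzero : Matrix.hadamard (A1 - A1) W1 = (0 : Matrix (Fin m) (Fin k) ℝ) := by
    rw [sub_self, Matrix.zero_hadamard]
  rw [hzero, sub_zero, frob_zero] at hobj
  have hlow := hadamard_lower (A1 - X1) W1 hWlam hlampos.le
  have hup := hadamard_upper A2 W2 hW2
  have hmid : 0 ≤ frob (Matrix.hadamard (A2 - X2) W2) ^ 2 := sq_nonneg _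
  have hkey : lam ^ 2 * frob (A1 - X1) ^ 2 ≤ ρ ^ 2 * a2 ^ 2 := by
    have h0 : (0:ℝ) ^ 2 = 0 := by norm_num
    linarith only [h0, hlow, hup, hmid, hobj]
  -- Step C : distance bound on X1
  have hd1 : frob (X1 - A1) ≤ ρ * a2 / lam := by
    rw [frob_sub_rev, le_div_iff₀ hlampos]
    have h2 : (frob (A1 - X1) * lam) ^ 2 ≤ (ρ * a2) ^ 2 := by
      calc (frob (A1 - X1) * lam) ^ 2 = lam ^ 2 * frob (A1 - X1) ^ 2 := by ring
        _ ≤ ρ ^ 2 * a2 ^ 2 := hkey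
        _ = (ρ * a2) ^ 2 := by ring
    have h3 := Real.sqrt_le_sqrt h2
    rwa [Real.sqrt_sq (mul_nonneg (frob_nonneg _) hlampos.le),
      Real.sqrt_sq (mul_nonneg hρ.le ha20)] at h3
  -- Step D : the distance is below ε1
  have hρa2ε : ρ * a2 / lam ≤ ε1 := by
    have hl1 : ρ * a2 / ε1 ≤ lam :=
      le_trans (le_trans (le_max_right _ _) (le_max_left _ _)) hlam0le
    rw [div_le_iff₀ hlampos]
    have h4 := mul_le_mul_of_nonneg_left hl1 hεpos.le
    calc ρ * a2 = ε1 * (ρ * a2 / ε1) := by field_simp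
      _ ≤ ε1 * lam := h4
  have hd1e : frob (X1 - A1) ≤ ε1 := le_trans hd1 hρa2ε
  have hd1a : frob (X1 - A1) ≤ 1 := le_trans hd1e (min_le_left _ _)
  have hd2a : frob (X1 - A1) ≤ 1 / (2 * c * (2 * b + 1)) :=
    le_trans hd1e (min_le_right _ _)
  -- Step E : Lipschitz bound for the projections
  have hPlip := projCol_lip hGdet hc hc1 hd1a hd2a
  -- Step F : perturbation of M
  have hM'M : (1 - projCol X1) * A2 - M = (projCol A1 - projCol X1) * A2 := by
    rw [hMdef, Matrix.sub_mul, Matrix.sub_mul, Matrix.sub_mul]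
    abel
  have hE : frob ((1 - projCol X1) * A2 - M) ≤ num / lam := by
    rw [hM'M]
    calc frob ((projCol A1 - projCol X1) * A2)
        ≤ frob (projCol A1 - projCol X1) * a2 := frob_mul_le _ _
      _ = frob (projCol X1 - projCol A1) * a2 := by rw [frob_sub_rev]
      _ ≤ (L * frob (X1 - A1)) * a2 := mul_le_mul_of_nonneg_right hPlip ha20
      _ ≤ (L * (ρ * a2 / lam)) * a2 := by
          exact mul_le_mul_of_nonneg_right (mul_le_mul_of_nonneg_left hd1 hL0) ha20
      _ = num / lam := by rw [hnumdef]; ring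
  have hnumlam : num ≤ lam := by
    have := le_trans (le_trans (le_max_right _ _) (le_max_right _ _)) hlam0le
    linarith
  have he1 : frob ((1 - projCol X1) * A2 - M) ≤ 1 := by
    refine le_trans hE ?_
    rw [div_le_one hlampos]
    exact hnumlam
  have hM'bound : frob ((1 - projCol X1) * A2) ≤ m0 + 1 := by
    have hid : (1 - projCol X1) * A2 = M + ((1 - projCol X1) * A2 - M) := by abel
    calc frob ((1 - projCol X1) * A2)
        = frob (M + ((1 - projCol X1) * A2 - M)) := by rw [← hid]
      _ ≤ frob M + frob ((1 - projCol X1) * A2 - M) := frob_add_le _ _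
      _ ≤ m0 + 1 := by rw [← hm0def]; linarith
  -- Step G : perturbation of M Mᵀ
  have hEhidg : ∀ N : Matrix (Fin m) (Fin l) ℝ,
      N * Nᵀ - M * Mᵀ = N * (N - M)ᵀ + (N - M) * Mᵀ := by
    intro N
    rw [Matrix.transpose_sub, Matrix.mul_sub, Matrix.sub_mul]
    abel
  have hEhid := hEhidg ((1 - projCol X1) * A2)
  have hEh : frob (((1 - projCol X1) * A2) * ((1 - projCol X1) * A2)ᵀ - M * Mᵀ)
      ≤ (2 * m0 + 1) * (num / lam) := by
    rw [hEhid]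
    have t1 : frob (((1 - projCol X1) * A2) * ((1 - projCol X1) * A2 - M)ᵀ)
        ≤ (m0 + 1) * frob ((1 - projCol X1) * A2 - M) := by
      calc frob (((1 - projCol X1) * A2) * ((1 - projCol X1) * A2 - M)ᵀ)
          ≤ frob ((1 - projCol X1) * A2) * frob ((1 - projCol X1) * A2 - M)ᵀ :=
            frob_mul_le _ _
        _ ≤ (m0 + 1) * frob ((1 - projCol X1) * A2 - M) := by
            rw [frob_transpose]
            exact mul_le_mul_of_nonneg_right hM'bound (frob_nonneg _)
    have t2 : frob (((1 - projCol X1) * A2 - M) * Mᵀ)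
        ≤ frob ((1 - projCol X1) * A2 - M) * m0 := by
      calc frob (((1 - projCol X1) * A2 - M) * Mᵀ)
          ≤ frob ((1 - projCol X1) * A2 - M) * frob Mᵀ := frob_mul_le _ _
        _ ≤ frob ((1 - projCol X1) * A2 - M) * m0 := by
            rw [frob_transpose, ← hm0def]
    have t3 := frob_add_le (((1 - projCol X1) * A2) * ((1 - projCol X1) * A2 - M)ᵀ)
      (((1 - projCol X1) * A2 - M) * Mᵀ)
    have step : (2 * m0 + 1) * frob ((1 - projCol X1) * A2 - M)
        ≤ (2 * m0 + 1) * (num / lam) :=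
      mul_le_mul_of_nonneg_left hE (by linarith only [hm00])
    linarith only [t1, t2, t3, step]
  have hEh2 : frob (((1 - projCol X1) * A2) * ((1 - projCol X1) * A2)ᵀ - M * Mᵀ)
      ≤ δ2 / 2 := by
    refine le_trans hEh ?_
    have hl2 : 2 * (2 * m0 + 1) * num / δ2 + 1 ≤ lam :=
      le_trans (le_trans (le_max_left _ _) (le_max_right _ _)) hlam0le
    rw [mul_div_assoc', div_le_div_iff₀ hlampos (by norm_num : (0:ℝ) < 2)]
    have h8 : δ2 * (2 * (2 * m0 + 1) * num / δ2 + 1) ≤ δ2 * lam :=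
      mul_le_mul_of_nonneg_left hl2 hδ2.le
    have h9 : δ2 * (2 * (2 * m0 + 1) * num / δ2) = 2 * (2 * m0 + 1) * num := by
      field_simp
    have h10 : δ2 * (2 * (2 * m0 + 1) * num / δ2 + 1)
        = δ2 * (2 * (2 * m0 + 1) * num / δ2) + δ2 := by ring
    calc (2 * m0 + 1) * num * 2 = 2 * (2 * m0 + 1) * num := by ring
      _ = δ2 * (2 * (2 * m0 + 1) * num / δ2) := h9.symm
      _ ≤ δ2 * (2 * (2 * m0 + 1) * num / δ2) + δ2 := le_add_of_nonneg_right hδ2.le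
      _ = δ2 * (2 * (2 * m0 + 1) * num / δ2 + 1) := by ring
      _ ≤ δ2 * lam := h8
  -- Step H : Davis-Kahan
  have hdk := dk hsvd hsvdt hrl hδ2 hEh2
  -- Step I : truncations as projections
  have hH1 : Ut * svdTrunc m l r' σt * Vtᵀ
      = (Ut * Matrix.diagonal (indv m r') * Utᵀ) * ((1 - projCol X1) * A2) :=
    trunc_eq_proj hsvdt r'
  have hH2 : U * svdTrunc m l r' σ * Vᵀ
      = (U * Matrix.diagonal (indv m r') * Uᵀ) * M := trunc_eq_proj hsvd r'
  have hsplitg : ∀ (Q Q' : Matrix (Fin m) (Fin m) ℝ) (N : Matrix (Fin m) (Fin l) ℝ),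
      Q * N - Q' * M = Q * (N - M) + (Q - Q') * M := by
    intro Q Q' N
    rw [Matrix.mul_sub, Matrix.sub_mul]
    abel
  have hsplit := hsplitg (Ut * Matrix.diagonal (indv m r') * Utᵀ)
    (U * Matrix.diagonal (indv m r') * Uᵀ) ((1 - projCol X1) * A2)
  rw [hH1, hH2, hsplit]
  have hP'le : frob (Ut * Matrix.diagonal (indv m r') * Utᵀ) ≤ (m : ℝ) :=
    proj_frob_le hsvdt.hUl r'
  have t1 : frob ((Ut * Matrix.diagonal (indv m r') * Utᵀ) * ((1 - projCol X1) * A2 - M))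
      ≤ (m : ℝ) * (num / lam) :=
    le_trans (frob_mul_le _ _)
      (mul_le_mul hP'le hE (frob_nonneg _) (Nat.cast_nonneg m))
  have t2 : frob (((Ut * Matrix.diagonal (indv m r') * Utᵀ)
        - (U * Matrix.diagonal (indv m r') * Uᵀ)) * M)
      ≤ ((2 / δ2) * ((2 * m0 + 1) * (num / lam))) * m0 := by
    calc frob (((Ut * Matrix.diagonal (indv m r') * Utᵀ)
          - (U * Matrix.diagonal (indv m r') * Uᵀ)) * M)
        ≤ frob ((Ut * Matrix.diagonal (indv m r') * Utᵀ)
          - (U * Matrix.diagonal (indv m r') * Uᵀ)) * m0 := by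
          refine le_trans (frob_mul_le _ _) ?_
          rw [← hm0def]
      _ ≤ ((2 / δ2) * ((2 * m0 + 1) * (num / lam))) * m0 := by
          refine mul_le_mul_of_nonneg_right (le_trans hdk ?_) hm00
          exact mul_le_mul_of_nonneg_left hEh (by positivity)
  have tadd := frob_add_le
    ((Ut * Matrix.diagonal (indv m r') * Utᵀ) * ((1 - projCol X1) * A2 - M))
    (((Ut * Matrix.diagonal (indv m r') * Utᵀ) - (U * Matrix.diagonal (indv m r') * Uᵀ)) * M)
  have hfin : (m : ℝ) * (num / lam) + ((2 / δ2) * ((2 * m0 + 1) * (num / lam))) * m0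
      = (K2 * num) / lam := by
    rw [hK2def]; ring
  have hlast : (K2 * num) / lam ≤ (K2 * num + 1) / lam :=
    (div_le_div_iff_of_pos_right hlampos).mpr (by linarith only [])
  linarith only [tadd, t1, t2, hfin, hlast]
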